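/- Let K be a field of characteristic 0, E/K an elliptic curve with E(K)[2] ≅ Z/2Z = C, and let S denote the image of H^1(K, C) in H^1(K, E[2]). Let V ⊆ H^1(K, E[2]) be an r-dimensional F_2-subspace with V ∩ S = 0. Then there exist σ_1, ..., σ_r in the absolute Galois group G_K, each acting nontrivially on E[2], such that the map V → ⊕_{i=1}^r E[2]/C sending the class of a cocycle c to (c(σ_1), ..., c(σ_r)) is well-defined and injective. -/

import Mathlib

open WeierstrassCurve WeierstrassCurve.Affine
open scoped Classical
open Polynomial

/-- The natural Galois action of `σ ∈ Gal(K̄/K)` on the `K̄`-points of a Weierstrass curve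
defined over `K`. -/
noncomputable def galAct {K : Type*} [Field K] (E : WeierstrassCurve K)
    (σ : AlgebraicClosure K ≃ₐ[K] AlgebraicClosure K) :
    (E⁄(AlgebraicClosure K)).Point →+ (E⁄(AlgebraicClosure K)).Point :=
  Point.map (W' := E) σ.toAlgHom

/-- `P` belongs to `C = E(K)[2]`: it is a Galois-fixed 2-torsion point of `E(K̄)`. -/
noncomputable def MemC {K : Type*} [Field K] (E : WeierstrassCurve K)
    (P : (E⁄(AlgebraicClosure K)).Point) : Prop :=
  2 • P = 0 ∧ ∀ σ : AlgebraicClosure K ≃ₐ[K] AlgebraicClosure K, galAct E σ P = P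

lemma zmod2_cases (x : ZMod 2) : x = 0 ∨ x = 1 := by revert x; decide

lemma zmod2_add_self (a : ZMod 2) : a + a = 0 := by revert a; decide

lemma zmod2_cancel {a b c : ZMod 2} (h1 : a + c = 0) (h2 : b + c = 0) : a = b := by
  revert a b c; decide

lemma single_sum_eq {r : ℕ} (s : Finset (Fin r)) (i : Fin r) :
    ∑ j ∈ s, (Pi.single i (1 : ZMod 2) : Fin r → ZMod 2) j = if i ∈ s then 1 else 0 := by
  simp_rw [Pi.single_apply]
  exact Finset.sum_ite_eq' s i fun _ => 1

lemma linalg {G : Type*} [Group G] {r : ℕ} (F : G → (Fin r → ZMod 2)) (ψ : G → ZMod 2)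
    (hF : ∀ g h, F (g * h) = F g + F h) (hψ : ∀ g h, ψ (g * h) = ψ g + ψ h)
    (h1 : ∀ s : Finset (Fin r), s.Nonempty → ∃ g, ∑ j ∈ s, F g j = 1)
    (h2 : ∃ g, ψ g = 1) :
    ∃ σs : Fin r → G, (∀ i, ψ (σs i) = 1) ∧
      ∀ s : Finset (Fin r), s.Nonempty → ∃ i, ∑ j ∈ s, F (σs i) j = 1 := by
  classical
  have hF1 : F 1 = 0 := by
    have := hF 1 1
    rw [mul_one] at this
    exact (left_eq_add.mp this)
  have hψ1 : ψ 1 = 0 := by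
    have := hψ 1 1
    rw [mul_one] at this
    exact (left_eq_add.mp this)
  -- surjectivity of F
  have hsurj : ∀ t : Fin r → ZMod 2, ∃ g, F g = t := by
    set U : Submodule (ZMod 2) (Fin r → ZMod 2) := Submodule.span (ZMod 2) (Set.range F) with hUdef
    have hmem : ∀ x ∈ U, ∃ g, F g = x := by
      intro x hx
      induction hx using Submodule.span_induction with
      | mem x hx => exact hx.imp fun g hg => hg
      | zero => exact ⟨1, hF1⟩
      | add x y _ _ hx hy =>
        obtain ⟨g, hg⟩ := hx; obtain ⟨g', hg'⟩ := hy
        exact ⟨g * g', by rw [hF, hg, hg']⟩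
      | smul c x _ hx =>
        obtain ⟨g, hg⟩ := hx
        rcases zmod2_cases c with hc | hc
        · exact ⟨1, by rw [hF1, hc, zero_smul]⟩
        · exact ⟨g, by rw [hg, hc, one_smul]⟩
    have hU : U = ⊤ := by
      by_contra hne
      obtain ⟨ℓ, hℓ0, hℓmap⟩ :=
        Submodule.exists_dual_map_eq_bot_of_lt_top (lt_top_iff_ne_top.mpr hne) inferInstance
      set s : Finset (Fin r) :=
        Finset.univ.filter (fun j => ℓ (Pi.single j (1 : ZMod 2)) = 1) with hs
      have hℓeval : ∀ x : Fin r → ZMod 2, ℓ x = ∑ j ∈ s, x j := by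
        intro x
        have hx : ℓ x = ∑ j, x j * ℓ (Pi.single j (1 : ZMod 2)) := by
          conv_lhs => rw [← Finset.univ_sum_single x]
          rw [map_sum]
          refine Finset.sum_congr rfl fun j _ => ?_
          have hone : (Pi.single j (x j) : Fin r → ZMod 2)
              = x j • (Pi.single j 1 : Fin r → ZMod 2) := by
            funext k
            rw [Pi.smul_apply, Pi.single_apply, Pi.single_apply]
            split <;> simp
          rw [hone, map_smul, smul_eq_mul]
        rw [hx, ← Finset.sum_subset (Finset.subset_univ s)]
        · refine Finset.sum_congr rfl fun j hj => ?_
          rw [hs, Finset.mem_filter] at hj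
          rw [hj.2, mul_one]
        · intro j _ hj
          rw [hs, Finset.mem_filter] at hj
          push_neg at hj
          rcases zmod2_cases (ℓ (Pi.single j (1 : ZMod 2))) with h | h
          · rw [h, mul_zero]
          · exact absurd h (hj (Finset.mem_univ j))
      have hsne : s.Nonempty := by
        rw [Finset.nonempty_iff_ne_empty]
        intro hemp
        apply hℓ0
        refine LinearMap.ext fun x => ?_
        rw [hℓeval x, hemp, Finset.sum_empty]
        simp
      obtain ⟨g, hg⟩ := h1 s hsne
      have hFgU : F g ∈ U := Submodule.subset_span (Set.mem_range_self g)
      have hze : ℓ (F g) = 0 := by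
        have : ℓ (F g) ∈ U.map ℓ := Submodule.mem_map_of_mem hFgU
        rwa [hℓmap, Submodule.mem_bot] at this
      rw [hℓeval (F g), hg] at hze
      exact one_ne_zero hze
    intro t
    exact hmem t (hU ▸ Submodule.mem_top)
  choose w hw using fun i => hsurj (Pi.single i 1)
  by_cases hcase : ∃ k, F k = 0 ∧ ψ k = 1
  · -- Case A
    obtain ⟨k, hk0, hk1⟩ := hcase
    refine ⟨fun i => if ψ (w i) = 1 then w i else w i * k, fun i => ?_, fun s hs => ?_⟩
    · show ψ (if ψ (w i) = 1 then w i else w i * k) = 1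
      split_ifs with h
      · exact h
      · rw [hψ, hk1]
        rcases zmod2_cases (ψ (w i)) with h0 | h0
        · rw [h0, zero_add]
        · exact absurd h0 h
    · obtain ⟨i, hi⟩ := hs
      refine ⟨i, ?_⟩
      have hFi : F (if ψ (w i) = 1 then w i else w i * k) = Pi.single i 1 := by
        split_ifs
        · exact hw i
        · rw [hF, hk0, add_zero]; exact hw i
      show ∑ j ∈ s, F (if ψ (w i) = 1 then w i else w i * k) j = 1
      rw [hFi, single_sum_eq, if_pos hi]
  · -- Case B
    push_neg at hcase
    have hcaseB : ∀ k, F k = 0 → ψ k = 0 := by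
      intro k hk
      rcases zmod2_cases (ψ k) with h | h
      · exact h
      · exact absurd h (hcase k hk)
    have hFinv : ∀ g : G, F g⁻¹ = F g := by
      intro g
      have h0 : F g⁻¹ + F g = 0 := by rw [← hF, inv_mul_cancel, hF1]
      funext j
      exact zmod2_cancel (congrFun h0 j) (zmod2_add_self _)
    have hψeq : ∀ g g', F g = F g' → ψ g = ψ g' := by
      intro g g' hgg
      have hk : F (g * g'⁻¹) = 0 := by
        rw [hF, hFinv, hgg]
        funext j
        exact zmod2_add_self _
      have h0 : ψ g + ψ g'⁻¹ = 0 := by rw [← hψ]; exact hcaseB _ hk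
      have h1' : ψ g' + ψ g'⁻¹ = 0 := by rw [← hψ, mul_inv_cancel, hψ1]
      exact zmod2_cancel h0 h1'
    -- products realizing sums of basis vectors
    have hprod : ∀ t : Finset (Fin r), ∃ g : G,
        F g = (fun j => if j ∈ t then 1 else 0) ∧ ψ g = ∑ j ∈ t, ψ (w j) := by
      intro t
      induction t using Finset.induction with
      | empty => exact ⟨1, by funext j; simp [hF1], by simp [hψ1]⟩
      | @insert a t' hnot ih =>
        obtain ⟨g, hg1, hg2⟩ := ih
        refine ⟨w a * g, ?_, ?_⟩
        · rw [hF, hg1, hw]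
          funext j
          rw [Pi.add_apply, Pi.single_apply]
          by_cases hj : j = a
          · subst hj
            rw [if_pos rfl, if_pos (Finset.mem_insert_self j t'), if_neg hnot, add_zero]
          · rw [if_neg hj, zero_add]
            by_cases hj' : j ∈ t' <;> simp [hj, hj', Finset.mem_insert]
        · rw [hψ, hg2, Finset.sum_insert hnot]
    -- ψ g is computed by the set s₀
    set s₀ : Finset (Fin r) := Finset.univ.filter (fun j => ψ (w j) = 1) with hs₀
    have hψsum : ∀ g, ψ g = ∑ j ∈ s₀, F g j := by
      intro g
      set t : Finset (Fin r) := Finset.univ.filter (fun j => F g j = 1) with ht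
      obtain ⟨g', hg'1, hg'2⟩ := hprod t
      have hFg : F g = F g' := by
        rw [hg'1]
        funext j
        rw [ht]
        simp only [Finset.mem_filter, Finset.mem_univ, true_and]
        rcases zmod2_cases (F g j) with h | h <;> rw [h] <;> simp
      rw [hψeq g g' hFg, hg'2]
      have hl : ∑ j ∈ t, ψ (w j) = ∑ j ∈ t, if j ∈ s₀ then (1 : ZMod 2) else 0 := by
        refine Finset.sum_congr rfl fun j _ => ?_
        rw [hs₀]
        simp only [Finset.mem_filter, Finset.mem_univ, true_and]
        rcases zmod2_cases (ψ (w j)) with h | h <;> rw [h] <;> simp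
      have hr : ∑ j ∈ s₀, F g j = ∑ j ∈ s₀, if j ∈ t then (1 : ZMod 2) else 0 := by
        refine Finset.sum_congr rfl fun j _ => ?_
        rw [ht]
        simp only [Finset.mem_filter, Finset.mem_univ, true_and]
        rcases zmod2_cases (F g j) with h | h <;> rw [h] <;> simp
      rw [hl, hr, Finset.sum_ite_mem, Finset.sum_ite_mem, Finset.inter_comm]
    have hs₀ne : s₀.Nonempty := by
      rw [Finset.nonempty_iff_ne_empty]
      intro hemp
      obtain ⟨g₀, hg₀⟩ := h2
      rw [hψsum g₀, hemp, Finset.sum_empty] at hg₀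
      exact one_ne_zero hg₀.symm
    obtain ⟨j₀, hj₀⟩ := hs₀ne
    have hψw : ∀ i, i ∈ s₀ → ψ (w i) = 1 := by
      intro i hi
      rw [hs₀, Finset.mem_filter] at hi
      exact hi.2
    have hψw' : ∀ i, i ∉ s₀ → ψ (w i) = 0 := by
      intro i hi
      rcases zmod2_cases (ψ (w i)) with h | h
      · exact h
      · exact absurd (by rw [hs₀, Finset.mem_filter]; exact ⟨Finset.mem_univ i, h⟩) hi
    refine ⟨fun i => if i ∈ s₀ then w i else w i * w j₀, fun i => ?_, fun s hs => ?_⟩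
    · show ψ (if i ∈ s₀ then w i else w i * w j₀) = 1
      split_ifs with h
      · exact hψw i h
      · rw [hψ, hψw' i h, hψw j₀ hj₀, zero_add]
    · by_cases hss : (s ∩ s₀).Nonempty
      · obtain ⟨i, hi⟩ := hss
        rw [Finset.mem_inter] at hi
        refine ⟨i, ?_⟩
        show ∑ j ∈ s, F (if i ∈ s₀ then w i else w i * w j₀) j = 1
        rw [if_pos hi.2, hw, single_sum_eq, if_pos hi.1]
      · obtain ⟨i, hi⟩ := hs
        have his₀ : i ∉ s₀ := fun h =>
          hss ⟨i, Finset.mem_inter.mpr ⟨hi, h⟩⟩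
        have hj₀s : j₀ ∉ s := fun h =>
          hss ⟨j₀, Finset.mem_inter.mpr ⟨h, hj₀⟩⟩
        refine ⟨i, ?_⟩
        show ∑ j ∈ s, F (if i ∈ s₀ then w i else w i * w j₀) j = 1
        rw [if_neg his₀, hF, hw, hw]
        simp_rw [Pi.add_apply]
        rw [Finset.sum_add_distrib, single_sum_eq, single_sum_eq,
          if_pos hi, if_neg hj₀s, add_zero]


set_option maxHeartbeats 1000000 in
/-- Let `K` be a field of characteristic 0, `E/K` an elliptic curve with
`E(K)[2] ≅ ℤ/2ℤ = C`, and let `S` denote the image of `H¹(K, C)` in `H¹(K, E[2])` (the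
classes representable by cocycles valued in `C`).  Let `V ⊆ H¹(K, E[2])` be an
`r`-dimensional `𝔽₂`-subspace with `V ∩ S = 0`; here `V` is given by cocycle representatives
`v 0, ..., v (r-1)` of a basis, the condition `V ∩ S = 0` (together with `dim V = r`) being
the hypothesis `hindep`: no nonzero `𝔽₂`-combination of the `v i` is a cocycle valued in `C`
plus a coboundary.  Then there exist `σ₁, ..., σᵣ ∈ G_K`, each acting nontrivially on `E[2]`,
such that the map `V → ⊕ᵢ E[2]/C`, sending the class of a cocycle `c` to
`(c(σ₁), ..., c(σᵣ)) mod C`, is well-defined (coboundaries evaluate into `C`) and injective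
(every nonzero combination has some evaluation outside `C`). -/
theorem stmt5 (K : Type*) [Field K] [CharZero K] (A B : K)
    (E : WeierstrassCurve K) (hE : E = ⟨0, A, 0, B, 0⟩) (hell : E.Δ ≠ 0)
    -- `E(K)[2] ≅ ℤ/2ℤ`:
    (htors : Nat.card {P : E.toAffine.Point // 2 • P = 0} = 2)
    (r : ℕ) (v : Fin r → ((AlgebraicClosure K ≃ₐ[K] AlgebraicClosure K) → (E⁄(AlgebraicClosure K)).Point))
    -- the `v i` are 1-cocycles valued in `E[2]`:
    (hval : ∀ i σ, 2 • v i σ = 0)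
    (hcocycle : ∀ i σ τ, v i (σ * τ) = v i σ + galAct E σ (v i τ))
    -- the classes of the `v i` span an `r`-dimensional subspace `V` with `V ∩ S = 0`:
    (hindep : ∀ s : Finset (Fin r),
      (∃ (c' : (AlgebraicClosure K ≃ₐ[K] AlgebraicClosure K) → (E⁄(AlgebraicClosure K)).Point)
        (P : (E⁄(AlgebraicClosure K)).Point), (∀ σ, MemC E (c' σ)) ∧ 2 • P = 0 ∧
          ∀ σ, ∑ j ∈ s, v j σ = c' σ + (galAct E σ P - P)) → s = ∅) :
    ∃ σs : Fin r → (AlgebraicClosure K ≃ₐ[K] AlgebraicClosure K),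
      -- each `σᵢ` acts nontrivially on `E[2]` (i.e. `σᵢ|_M ≠ 1` for `M = K(E[2])`):
      (∀ i, ∃ T : (E⁄(AlgebraicClosure K)).Point, 2 • T = 0 ∧ galAct E (σs i) T ≠ T) ∧
      -- well-definedness: coboundaries of 2-torsion points evaluate into `C`:
      (∀ P : (E⁄(AlgebraicClosure K)).Point, 2 • P = 0 → ∀ i, MemC E (galAct E (σs i) P - P)) ∧
      -- injectivity on `V` of `c ↦ (c(σ₁), ..., c(σᵣ)) mod C`:
      (∀ s : Finset (Fin r), s.Nonempty → ∃ i, ¬MemC E (∑ j ∈ s, v j (σs i))) := by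

  classical
  set L := AlgebraicClosure K with hLdef
  set A' : L := algebraMap K L A with hA'def
  set B' : L := algebraMap K L B with hB'def
  have ha1 : E.a₁ = 0 := by rw [hE]
  have ha2 : E.a₂ = A := by rw [hE]
  have ha3 : E.a₃ = 0 := by rw [hE]
  have ha4 : E.a₄ = B := by rw [hE]
  have ha6 : E.a₆ = 0 := by rw [hE]
  have hDelta : E.Δ = 16*A^2*B^2 - 64*B^3 := by
    simp only [WeierstrassCurve.Δ, b₂, b₄, b₆, b₈, ha1, ha2, ha3, ha4, ha6]
    ring
  have hB : B ≠ 0 := by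
    intro h; exact hell (by rw [hDelta, h]; ring)
  have hD : A^2 - 4*B ≠ 0 := by
    intro h
    apply hell
    rw [hDelta]
    linear_combination (16*B^2) * h
  -- base-changed curve coefficients
  have hLa1 : (E.baseChange L).a₁ = 0 := by rw [hE]; simp
  have hLa2 : (E.baseChange L).a₂ = A' := by rw [hE, hA'def]; simp
  have hLa3 : (E.baseChange L).a₃ = 0 := by rw [hE]; simp
  have hLa4 : (E.baseChange L).a₄ = B' := by rw [hE, hB'def]; simp
  have hLa6 : (E.baseChange L).a₆ = 0 := by rw [hE]; simp
  have hellL : (E.baseChange L).Δ ≠ 0 := by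
    rw [show (E.baseChange L) = E.map (algebraMap K L) from rfl, map_Δ]
    intro h
    exact hell ((map_eq_zero_iff (algebraMap K L) (algebraMap K L).injective).mp h)
  have heqL : ∀ x y : L, (E.baseChange L).toAffine.Equation x y ↔
      y^2 = x^3 + A'*x^2 + B'*x := by
    intro x y
    rw [equation_iff, hLa1, hLa2, hLa3, hLa4, hLa6]
    constructor <;> intro h <;> linear_combination h
  have hnegY : ∀ x y : L, (E.baseChange L).toAffine.negY x y = -y := by
    intro x y
    rw [negY, hLa1, hLa3]
    ring
  -- there is no rational 2-torsion beyond {O, (0,0)}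
  have hroot : ∀ x : K, x^2 + A*x + B ≠ 0 := by
    intro x hx
    have hx0 : x ≠ 0 := by
      intro h; rw [h] at hx; apply hB; linear_combination hx
    have heqK : ∀ z y : K, E.toAffine.Equation z y ↔ y^2 = z^3 + A*z^2 + B*z := by
      intro z y
      rw [equation_iff, ha1, ha2, ha3, ha4, ha6]
      constructor <;> intro h <;> linear_combination h
    have h00 : E.toAffine.Equation 0 0 := by rw [heqK]; ring
    have hxx : E.toAffine.Equation x 0 := by rw [heqK]; linear_combination (-x) * hx
    have ns0 : E.toAffine.Nonsingular 0 0 := (E.toAffine.equation_iff_nonsingular_of_Δ_ne_zero hell).mp h00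
    have nsx : E.toAffine.Nonsingular x 0 := (E.toAffine.equation_iff_nonsingular_of_Δ_ne_zero hell).mp hxx
    have hnegYK : ∀ z y : K, E.toAffine.negY z y = -y := by
      intro z y; rw [negY, ha1, ha3]; ring
    have htor : ∀ z : K, ∀ h : E.toAffine.Nonsingular z 0, 2 • Point.some _ _ h = 0 := by
      intro z h
      rw [two_nsmul]
      exact Point.add_self_of_Y_eq (by rw [hnegYK]; ring)
    have hfin : Finite {P : E.toAffine.Point // 2 • P = 0} := by
      apply Nat.finite_of_card_ne_zero; rw [htors]; norm_num
    have hne1 : Point.some _ _ ns0 ≠ (0 : E.toAffine.Point) := Point.some_ne_zero ns0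
    have hne2 : Point.some _ _ nsx ≠ (0 : E.toAffine.Point) := Point.some_ne_zero nsx
    have hne3 : Point.some _ _ ns0 ≠ Point.some _ _ nsx := by
      intro h; rw [Point.some.injEq] at h; exact hx0 h.1.symm
    have hfint : Fintype {P : E.toAffine.Point // 2 • P = 0} := Fintype.ofFinite _
    set S := {P : E.toAffine.Point // 2 • P = 0}
    set e0 : S := ⟨0, smul_zero 2⟩ with he0
    set e1 : S := ⟨Point.some _ _ ns0, htor 0 ns0⟩ with he1
    set e2 : S := ⟨Point.some _ _ nsx, htor x nsx⟩ with he2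
    have h01 : e0 ≠ e1 := fun h => hne1 (congrArg Subtype.val h).symm
    have h02 : e0 ≠ e2 := fun h => hne2 (congrArg Subtype.val h).symm
    have h12 : e1 ≠ e2 := fun h => hne3 (congrArg Subtype.val h)
    have hcard3 : ({e0, e1, e2} : Finset S).card = 3 := by
      rw [Finset.card_insert_of_notMem (by simp [h01, h02]),
        Finset.card_insert_of_notMem (by simp [h12]), Finset.card_singleton]
    have hle := Finset.card_le_univ ({e0, e1, e2} : Finset S)
    rw [hcard3] at hle
    rw [Nat.card_eq_fintype_card] at htors
    omega
  -- roots of the quadratic over L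
  obtain ⟨α, hα⟩ : ∃ α : L, α^2 + A'*α + B' = 0 := by
    obtain ⟨α, hα⟩ := IsAlgClosed.exists_root (C 1 * X^2 + C A' * X + C B')
      (by rw [degree_quadratic one_ne_zero]; norm_num)
    refine ⟨α, ?_⟩
    have := hα
    simp only [IsRoot, eval_add, eval_mul, eval_pow, eval_C, eval_X, one_mul] at this
    linear_combination this
  set β : L := -A' - α with hβdef
  have hprod : α * β = B' := by rw [hβdef]; linear_combination -hα
  have hβ : β^2 + A'*β + B' = 0 := by rw [hβdef]; linear_combination hα
  have hαβ : α ≠ β := by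
    intro h
    apply hD
    have hc : α + α + A' = 0 := by rw [hβdef] at h; linear_combination h
    have : A'^2 - 4*B' = 0 := by linear_combination (α + α + A') * hc - 4*hα
    rw [hA'def, hB'def] at this
    have : algebraMap K L (A^2 - 4*B) = 0 := by
      simp only [map_sub, map_pow, map_mul, map_ofNat]
      linear_combination this
    exact (map_eq_zero_iff (algebraMap K L) (algebraMap K L).injective).mp this
  have hα0 : α ≠ 0 := by
    intro h
    apply hB
    have : B' = 0 := by rw [h] at hα; linear_combination hα
    rw [hB'def] at this
    exact (map_eq_zero_iff (algebraMap K L) (algebraMap K L).injective).mp this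
  have hβ0 : β ≠ 0 := by
    intro h
    apply hB
    have : B' = 0 := by rw [h] at hβ; linear_combination hβ
    rw [hB'def] at this
    exact (map_eq_zero_iff (algebraMap K L) (algebraMap K L).injective).mp this
  have hroots : ∀ z : L, z^2 + A'*z + B' = 0 → z = α ∨ z = β := by
    intro z hz
    have hfact : (z - α) * (z - β) = 0 := by
      rw [hβdef]; linear_combination hz - hα - (z - α)*hα*0
    rcases mul_eq_zero.mp hfact with h | h
    · exact Or.inl (sub_eq_zero.mp h)
    · exact Or.inr (sub_eq_zero.mp h)
  -- an automorphism swapping α and β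
  have hαnotK : α ∉ (algebraMap K L).range := by
    rintro ⟨x, rfl⟩
    apply hroot x
    apply (algebraMap K L).injective
    rw [map_add, map_add, map_pow, map_mul, map_zero]
    rw [hA'def, hB'def] at hα
    linear_combination hα
  obtain ⟨σ₀, hσ₀⟩ : ∃ σ : L ≃ₐ[K] L, σ α = β := by
    set q : K[X] := X^2 + C A * X + C B with hq
    have hmq : q.Monic := by
      rw [hq, add_assoc]
      exact monic_X_pow_add (lt_of_le_of_lt degree_linear_le (by norm_num))
    have hq2 : q.natDegree = 2 := by rw [hq]; compute_degree!
    have haev : (aeval α) q = 0 := by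
      rw [hq]
      simp only [map_add, map_pow, map_mul, aeval_X, aeval_C]
      rw [← hA'def, ← hB'def]
      linear_combination hα
    have hint : IsIntegral K α := ⟨q, hmq, haev⟩
    have hdvd : minpoly K α ∣ q := minpoly.dvd K α haev
    have hdeg2 : 2 ≤ (minpoly K α).natDegree := (minpoly.two_le_natDegree_iff hint).mpr hαnotK
    have hminq : minpoly K α = q := by
      apply eq_of_dvd_of_natDegree_le_of_leadingCoeff hdvd (by rw [hq2]; exact hdeg2)
      rw [(minpoly.monic hint).leadingCoeff, hmq.leadingCoeff]
    have hβev : (aeval β) (minpoly K α) = 0 := by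
      rw [hminq, hq]
      simp only [map_add, map_pow, map_mul, aeval_X, aeval_C]
      rw [← hA'def, ← hB'def]
      linear_combination hβ
    exact minpoly.exists_algEquiv_of_root' (Algebra.IsAlgebraic.isAlgebraic α) hβev
  have hσ₀β : σ₀ β = α := by
    have : σ₀ β = -A' - σ₀ α := by
      rw [hβdef, map_sub, map_neg, AlgEquiv.commutes]
    rw [this, hσ₀, hβdef]
    ring
  -- action of any automorphism on the roots
  have hact : ∀ σ : L ≃ₐ[K] L, (σ α = α ∧ σ β = β) ∨ (σ α = β ∧ σ β = α) := by
    intro σ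
    have hσβ : σ β = -A' - σ α := by rw [hβdef, map_sub, map_neg, AlgEquiv.commutes]
    have : (σ α)^2 + A'*(σ α) + B' = 0 := by
      have := congrArg σ hα
      rw [map_add, map_add, map_pow, map_mul, map_zero] at this
      rw [hA'def, hB'def] at this ⊢
      rw [AlgEquiv.commutes, AlgEquiv.commutes] at this
      exact this
    rcases hroots _ this with h | h
    · left
      exact ⟨h, by rw [hσβ, h, hβdef]⟩
    · right
      refine ⟨h, ?_⟩
      rw [hσβ, h, hβdef]
      ring
  have hfact : ∀ z : L, (z - α) * (z - β) = z^2 + A'*z + B' := by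
    intro z
    rw [hβdef]
    linear_combination -hα
  have hsome_eq : ∀ {x1 y1 x2 y2 : L} (h1 : (E.baseChange L).toAffine.Nonsingular x1 y1)
      (h2 : (E.baseChange L).toAffine.Nonsingular x2 y2), x1 = x2 → y1 = y2 →
      Point.some _ _ h1 = Point.some _ _ h2 := by
    intro x1 y1 x2 y2 h1 h2 hx hy
    subst hx; subst hy; rfl
  have eq00 : (E.baseChange L).toAffine.Equation 0 0 := by rw [heqL]; ring
  have eqα : (E.baseChange L).toAffine.Equation α 0 := by
    rw [heqL]; linear_combination (-α) * hα
  have eqβ : (E.baseChange L).toAffine.Equation β 0 := by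
    rw [heqL]; linear_combination (-β) * hβ
  have ns00 := ((E.baseChange L).toAffine.equation_iff_nonsingular_of_Δ_ne_zero hellL).mp eq00
  have nsα := ((E.baseChange L).toAffine.equation_iff_nonsingular_of_Δ_ne_zero hellL).mp eqα
  have nsβ := ((E.baseChange L).toAffine.equation_iff_nonsingular_of_Δ_ne_zero hellL).mp eqβ
  set P0 : (E⁄(AlgebraicClosure K)).Point := Point.some _ _ ns00 with hP0def
  set Q : (E⁄(AlgebraicClosure K)).Point := Point.some _ _ nsα with hQdef
  set R : (E⁄(AlgebraicClosure K)).Point := Point.some _ _ nsβ with hRdef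
  have htorY0 : ∀ (x : L) (h : (E.baseChange L).toAffine.Nonsingular x 0),
      2 • (Point.some _ _ h : (E⁄(AlgebraicClosure K)).Point) = 0 := by
    intro x h
    rw [two_nsmul]
    exact Point.add_self_of_Y_eq (by rw [hnegY]; ring)
  have htor2 : ∀ P : (E⁄(AlgebraicClosure K)).Point, 2 • P = 0 → P = 0 ∨ P = P0 ∨ P = Q ∨ P = R := by
    intro P hP
    cases P with
    | zero => exact Or.inl rfl
    | some x y h =>
      rw [two_nsmul] at hP
      have hy : y = 0 := by
        by_contra hy
        have hne : y ≠ (E.baseChange L).toAffine.negY x y := by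
          rw [hnegY]
          intro hc
          apply hy
          have h2 : (2 : L) * y = 0 := by linear_combination hc
          rcases mul_eq_zero.mp h2 with h' | h'
          · exact absurd h' two_ne_zero
          · exact h'
        rw [Point.add_self_of_Y_ne hne] at hP
        exact Point.some_ne_zero _ hP
      subst hy
      have hxeq : x * ((x - α) * (x - β)) = 0 := by
        rw [hfact]
        have := (heqL x 0).mp h.1
        linear_combination -this
      rcases mul_eq_zero.mp hxeq with h0 | h0
      · subst h0
        exact Or.inr (Or.inl (hsome_eq h ns00 rfl rfl))
      · rcases mul_eq_zero.mp h0 with h1 | h1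
        · exact Or.inr (Or.inr (Or.inl (hsome_eq h nsα (sub_eq_zero.mp h1) rfl)))
        · exact Or.inr (Or.inr (Or.inr (hsome_eq h nsβ (sub_eq_zero.mp h1) rfl)))
  -- addition table
  have haddY0 : ∀ (x1 x2 x3 : L) (h1 : (E.baseChange L).toAffine.Nonsingular x1 0)
      (h2 : (E.baseChange L).toAffine.Nonsingular x2 0)
      (h3 : (E.baseChange L).toAffine.Nonsingular x3 0),
      x1 ≠ x2 → x1 + x2 + x3 = -A' → Point.some _ _ h1 + Point.some _ _ h2 = Point.some _ _ h3 := by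
    intro x1 x2 x3 h1 h2 h3 hx hsum
    have hs : (E.baseChange L).toAffine.slope x1 x2 0 0 = 0 := by
      rw [slope_of_X_ne hx]
      simp
    rw [Point.add_of_X_ne hx]
    apply hsome_eq
    · rw [addX, hs, hLa1, hLa2]
      linear_combination -hsum
    · rw [addY, negAddY, hs, hnegY]
      ring
  have hQR : Q + R = P0 := haddY0 α β 0 nsα nsβ ns00 hαβ (by rw [hβdef]; ring)
  have hQP0 : Q + P0 = R := haddY0 α 0 β nsα ns00 nsβ hα0 (by rw [hβdef]; ring)
  have hRP0 : R + P0 = Q := haddY0 β 0 α nsβ ns00 nsα hβ0 (by rw [hβdef]; ring)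
  have hRQ : R + Q = P0 := by rw [add_comm]; exact hQR
  have hP0Q : P0 + Q = R := by rw [add_comm]; exact hQP0
  have hP0R : P0 + R = Q := by rw [add_comm]; exact hRP0
  have hQQ : Q + Q = 0 := by have := htorY0 α nsα; rwa [two_nsmul] at this
  have hRR : R + R = 0 := by have := htorY0 β nsβ; rwa [two_nsmul] at this
  have hP0P0 : P0 + P0 = 0 := by have := htorY0 0 ns00; rwa [two_nsmul] at this
  -- distinctness
  have hQ0 : Q ≠ 0 := Point.some_ne_zero nsα
  have hR0 : R ≠ 0 := Point.some_ne_zero nsβ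
  have hP0Qne : P0 ≠ Q := by
    intro h; rw [hP0def, hQdef, Point.some.injEq] at h; exact hα0 h.1.symm
  have hP0Rne : P0 ≠ R := by
    intro h; rw [hP0def, hRdef, Point.some.injEq] at h; exact hβ0 h.1.symm
  have hQRne : Q ≠ R := by
    intro h; rw [hQdef, hRdef, Point.some.injEq] at h; exact hαβ h.1
  -- the quotient map to E[2]/C
  set φ : (E⁄(AlgebraicClosure K)).Point → ZMod 2 := fun P => if P = Q ∨ P = R then 1 else 0 with hφdef
  have hφ0 : φ 0 = 0 := by
    simp only [hφdef]
    rw [if_neg]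
    rintro (h | h)
    · exact hQ0 h.symm
    · exact hR0 h.symm
  have hφP0 : φ P0 = 0 := by
    simp only [hφdef]
    rw [if_neg]
    rintro (h | h)
    · exact hP0Qne h
    · exact hP0Rne h
  have hφQ : φ Q = 1 := by simp [hφdef]
  have hφR : φ R = 1 := by simp [hφdef]
  have hφadd : ∀ P P' : (E⁄(AlgebraicClosure K)).Point, 2 • P = 0 → 2 • P' = 0 →
      φ (P + P') = φ P + φ P' := by
    intro P P' hP hP'
    rcases htor2 P hP with rfl | rfl | rfl | rfl <;>
      rcases htor2 P' hP' with rfl | rfl | rfl | rfl <;>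
      simp only [zero_add, add_zero, hQQ, hRR, hP0P0, hQR, hRQ, hQP0, hRP0, hP0Q, hP0R,
        hφ0, hφP0, hφQ, hφR] <;>
      decide
  -- Galois action on points
  have hgal_some : ∀ (σ : L ≃ₐ[K] L) (x y : L) (h : (E.baseChange L).toAffine.Nonsingular x y),
      galAct E σ (Point.some _ _ h) =
        Point.some _ _ ((E.toAffine.baseChange_nonsingular σ.toAlgHom.injective x y).mpr h) := by
    intro σ x y h
    exact Point.map_some (W' := E) (f := σ.toAlgHom) h
  have htoAlg : ∀ (σ : L ≃ₐ[K] L) (z : L), σ.toAlgHom z = σ z := fun _ _ => rfl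
  have hgalP0 : ∀ σ : L ≃ₐ[K] L, galAct E σ P0 = P0 := by
    intro σ
    rw [hP0def, hgal_some]
    exact hsome_eq _ _ (map_zero _) (map_zero _)
  have hgalQ : ∀ σ : L ≃ₐ[K] L, σ α = α → galAct E σ Q = Q := by
    intro σ h
    rw [hQdef, hgal_some]
    exact hsome_eq _ _ ((htoAlg σ α).trans h) (map_zero _)
  have hgalQ' : ∀ σ : L ≃ₐ[K] L, σ α = β → galAct E σ Q = R := by
    intro σ h
    rw [hQdef, hgal_some, hRdef]
    exact hsome_eq _ _ ((htoAlg σ α).trans h) (map_zero _)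
  have hgalR : ∀ σ : L ≃ₐ[K] L, σ β = β → galAct E σ R = R := by
    intro σ h
    rw [hRdef, hgal_some]
    exact hsome_eq _ _ ((htoAlg σ β).trans h) (map_zero _)
  have hgalR' : ∀ σ : L ≃ₐ[K] L, σ β = α → galAct E σ R = Q := by
    intro σ h
    rw [hRdef, hgal_some, hQdef]
    exact hsome_eq _ _ ((htoAlg σ β).trans h) (map_zero _)
  have h2z : 2 • (0 : (E⁄(AlgebraicClosure K)).Point) = 0 := by rw [two_nsmul, add_zero]
  have hMemC0 : MemC E 0 := ⟨h2z, fun σ => map_zero _⟩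
  have hMemCP0 : MemC E P0 := ⟨htorY0 0 ns00, hgalP0⟩
  have hnotQ : ¬ MemC E Q := by
    intro h
    have := h.2 σ₀
    rw [hgalQ' σ₀ hσ₀] at this
    exact hQRne this.symm
  have hnotR : ¬ MemC E R := by
    intro h
    have := h.2 σ₀
    rw [hgalR' σ₀ hσ₀β] at this
    exact hQRne this
  have hgaltor : ∀ (σ : L ≃ₐ[K] L) (P : (E⁄(AlgebraicClosure K)).Point), 2 • P = 0 →
      2 • galAct E σ P = 0 := by
    intro σ P hP
    rw [← map_nsmul, hP, map_zero]
  have hφgal : ∀ (σ : L ≃ₐ[K] L) (P : (E⁄(AlgebraicClosure K)).Point), 2 • P = 0 →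
      φ (galAct E σ P) = φ P := by
    intro σ P hP
    rcases htor2 P hP with rfl | rfl | rfl | rfl
    · rw [map_zero]
    · rw [hgalP0]
    · rcases hact σ with ⟨h1, _⟩ | ⟨h1, _⟩
      · rw [hgalQ σ h1]
      · rw [hgalQ' σ h1, hφQ, hφR]
    · rcases hact σ with ⟨_, h2⟩ | ⟨_, h2⟩
      · rw [hgalR σ h2]
      · rw [hgalR' σ h2, hφQ, hφR]
  have hsumtor : ∀ (s : Finset (Fin r)) (σ : L ≃ₐ[K] L), 2 • (∑ j ∈ s, v j σ) = 0 := by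
    intro s σ
    rw [Finset.smul_sum]
    exact Finset.sum_eq_zero fun j _ => hval j σ
  have hφsum : ∀ (s : Finset (Fin r)) (σ : L ≃ₐ[K] L),
      φ (∑ j ∈ s, v j σ) = ∑ j ∈ s, φ (v j σ) := by
    intro s σ
    induction s using Finset.induction with
    | empty => simpa using hφ0
    | @insert a t hnot ih =>
      rw [Finset.sum_insert hnot, Finset.sum_insert hnot,
        hφadd _ _ (hval a σ) (hsumtor t σ), ih]
  have hFhom : ∀ (i : Fin r) (σ τ : L ≃ₐ[K] L), φ (v i (σ * τ)) = φ (v i σ) + φ (v i τ) := by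
    intro i σ τ
    rw [hcocycle i σ τ, hφadd _ _ (hval i σ) (hgaltor σ _ (hval i τ)), hφgal σ _ (hval i τ)]
  set ψ : (L ≃ₐ[K] L) → ZMod 2 := fun σ => if σ α = α then 0 else 1 with hψdef
  have hβα : β ≠ α := Ne.symm hαβ
  have hψhom : ∀ σ τ : L ≃ₐ[K] L, ψ (σ * τ) = ψ σ + ψ τ := by
    intro σ τ
    have hmul : (σ * τ) α = σ (τ α) := rfl
    rcases hact τ with ⟨h1, h2⟩ | ⟨h1, h2⟩ <;> rcases hact σ with ⟨g1, g2⟩ | ⟨g1, g2⟩ <;>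
      simp only [hψdef, hmul, h1, h2, g1, g2] <;>
      simp [hαβ, hβα] <;> decide
  have h1lin : ∀ s : Finset (Fin r), s.Nonempty → ∃ g, ∑ j ∈ s, φ (v j g) = 1 := by
    intro s hs
    by_contra hno
    push_neg at hno
    have hzero : ∀ g, φ (∑ j ∈ s, v j g) = 0 := by
      intro g
      rw [hφsum]
      rcases zmod2_cases (∑ j ∈ s, φ (v j g)) with h | h
      · exact h
      · exact absurd h (hno g)
    have hmem : ∀ σ : L ≃ₐ[K] L, MemC E (∑ j ∈ s, v j σ) := by
      intro σ
      rcases htor2 _ (hsumtor s σ) with h | h | h | h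
      · rw [h]; exact hMemC0
      · rw [h]; exact hMemCP0
      · exfalso; have := hzero σ; rw [h, hφQ] at this; exact one_ne_zero this
      · exfalso; have := hzero σ; rw [h, hφR] at this; exact one_ne_zero this
    have := hindep s ⟨fun σ => ∑ j ∈ s, v j σ, 0, hmem, h2z, fun σ => by
      rw [map_zero, sub_zero, add_zero]⟩
    rw [this] at hs
    exact Finset.not_nonempty_empty hs
  have h2lin : ∃ g, ψ g = 1 := by
    refine ⟨σ₀, ?_⟩
    simp only [hψdef, hσ₀]
    rw [if_neg hβα]
  obtain ⟨σs, hψs, hinject⟩ := linalg (G := L ≃ₐ[K] L) (r := r)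
    (fun g j => φ (v j g)) ψ
    (fun g h => funext fun j => hFhom j g h) hψhom h1lin h2lin
  have hψα : ∀ i, σs i α ≠ α := by
    intro i h
    have := hψs i
    simp only [hψdef] at this
    rw [if_pos h] at this
    exact zero_ne_one this
  refine ⟨σs, fun i => ⟨Q, htorY0 α nsα, ?_⟩, fun P hP i => ?_, fun s hs => ?_⟩
  · intro hQfix
    rcases hact (σs i) with ⟨h1, _⟩ | ⟨h1, _⟩
    · exact hψα i h1
    · rw [hgalQ' _ h1] at hQfix
      exact hQRne hQfix.symm
  · rcases htor2 P hP with rfl | rfl | rfl | rfl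
    · rw [map_zero, sub_zero]; exact hMemC0
    · rw [hgalP0, sub_self]; exact hMemC0
    · rcases hact (σs i) with ⟨h1, _⟩ | ⟨h1, _⟩
      · rw [hgalQ _ h1, sub_self]; exact hMemC0
      · rw [hgalQ' _ h1, sub_eq_iff_eq_add.mpr hP0Q.symm]
        exact hMemCP0
    · rcases hact (σs i) with ⟨_, h2⟩ | ⟨_, h2⟩
      · rw [hgalR _ h2, sub_self]; exact hMemC0
      · rw [hgalR' _ h2, sub_eq_iff_eq_add.mpr hP0R.symm]
        exact hMemCP0
  · obtain ⟨i, hi⟩ := hinject s hs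
    refine ⟨i, ?_⟩
    intro hmem
    have hone : φ (∑ j ∈ s, v j (σs i)) = 1 := by rw [hφsum]; exact hi
    rcases htor2 _ (hsumtor s (σs i)) with h | h | h | h
    · rw [h, hφ0] at hone; exact one_ne_zero hone.symm
    · rw [h, hφP0] at hone; exact one_ne_zero hone.symm
    · rw [h] at hmem; exact hnotQ hmem
    · rw [h] at hmem; exact hnotR hmem
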